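/- Let C_0 = {(log|z_1|,…,log|z_n|) : |z_1|² + ⋯ + |z_n|² < 1} ⊂ ℝⁿ and let f, g be convex functions on C_0 increasing in each variable, with f = g = 0 on ∂C_0, and such that along every half-line of the form {(x_1+t,…,x_{j−1}+t, x_j, x_{j+1}+t,…,x_n+t) : t → −∞} the functions f and g stay bounded below (f and g are finite where only some coordinates tend to −∞). Then the following are equivalent: (1) lim_{c→+∞} P_{C_0}(f, g+c) = f almost everywhere on C_0; (2) for each a ∈ C_0 and each b ∈ ℕⁿ with strictly positive entries, lim_{t→−∞} f(a+tb)/t ≥ lim_{t→−∞} g(a+tb)/t. -/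

import Mathlib

open Filter MeasureTheory Metric Set
open scoped ENNReal Topology

noncomputable section

/-- The logarithmic image of the unit ball:
`C₀ = {(log|z₁|,…,log|zₙ|) : Σ|zᵢ|² < 1} = {x : Σ e^{2xᵢ} < 1}`. -/
def C0 (n : ℕ) : Set (Fin n → ℝ) := {x | ∑ i, Real.exp (2 * x i) < 1}

/-- The convex envelope `P_{C₀}(f, g+c)(x)`: the supremum at `x` of all convex functions on
`C₀` lying below `min(f, g+c)` on `C₀`. -/
def convEnv (n : ℕ) (f g : (Fin n → ℝ) → ℝ) (c : ℝ) (x : Fin n → ℝ) : EReal :=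
  ⨆ (u : (Fin n → ℝ) → ℝ) (_ : ConvexOn ℝ (C0 n) u ∧
      ∀ y ∈ C0 n, u y ≤ min (f y) (g y + c)), ((u x : ℝ) : EReal)

/-- The slope at infinity of `h` along the ray `t ↦ a + t b`, `t → -∞`
(for convex `h` the `limsup` is an honest limit). -/
def raySlope (n : ℕ) (h : (Fin n → ℝ) → ℝ) (a b : Fin n → ℝ) : EReal :=
  Filter.limsup (fun t : ℝ => ((h (a + t • b) / t : ℝ) : EReal)) atBot

namespace Aux


variable {n : ℕ}

lemma isOpen_C0 : IsOpen (C0 n) := by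
  have hc : Continuous fun x : Fin n → ℝ => ∑ i, Real.exp (2 * x i) :=
    continuous_finset_sum _ fun i _ =>
      Real.continuous_exp.comp (continuous_const.mul (continuous_apply i))
  exact isOpen_lt hc continuous_const

lemma convex_C0 : Convex ℝ (C0 n) := by
  intro x hx y hy a b ha hb hab
  have key : ∀ i, Real.exp (2 * (a • x + b • y) i) ≤
      a * Real.exp (2 * x i) + b * Real.exp (2 * y i) := by
    intro i
    have := convexOn_exp.2 (Set.mem_univ (2 * x i)) (Set.mem_univ (2 * y i)) ha hb hab
    simp only [smul_eq_mul] at this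
    have hxy : (2 : ℝ) * (a • x + b • y) i = a * (2 * x i) + b * (2 * y i) := by
      simp [Pi.add_apply, Pi.smul_apply, smul_eq_mul]; ring
    rw [hxy]; exact this
  have hsum : ∑ i, Real.exp (2 * (a • x + b • y) i) ≤
      a * ∑ i, Real.exp (2 * x i) + b * ∑ i, Real.exp (2 * y i) := by
    rw [Finset.mul_sum, Finset.mul_sum, ← Finset.sum_add_distrib]
    exact Finset.sum_le_sum fun i _ => key i
  have hx' : a * ∑ i, Real.exp (2 * x i) ≤ a * 1 :=
    mul_le_mul_of_nonneg_left (le_of_lt hx) ha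
  have hy' : b * ∑ i, Real.exp (2 * y i) ≤ b * 1 :=
    mul_le_mul_of_nonneg_left (le_of_lt hy) hb
  rcases ha.eq_or_lt with rfl | ha'
  · have : b = 1 := by linarith
    subst this
    refine lt_of_le_of_lt hsum ?_
    simp
    exact hy
  · have hx'' : a * ∑ i, Real.exp (2 * x i) < a * 1 :=
      mul_lt_mul_of_pos_left hx ha'
    calc ∑ i, Real.exp (2 * (a • x + b • y) i)
        ≤ a * ∑ i, Real.exp (2 * x i) + b * ∑ i, Real.exp (2 * y i) := hsum
      _ < a * 1 + b * 1 := by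
          exact add_lt_add_of_lt_of_le hx'' hy'
      _ = 1 := by linarith

lemma C0_mono {x y : Fin n → ℝ} (h : ∀ i, y i ≤ x i) (hx : x ∈ C0 n) : y ∈ C0 n := by
  have : ∑ i, Real.exp (2 * y i) ≤ ∑ i, Real.exp (2 * x i) :=
    Finset.sum_le_sum fun i _ => Real.exp_le_exp.2 (by linarith [h i])
  exact lt_of_le_of_lt this hx

lemma C0_neg {x : Fin n → ℝ} (hx : x ∈ C0 n) (i : Fin n) : x i < 0 := by
  have h1 : Real.exp (2 * x i) ≤ ∑ j, Real.exp (2 * x j) :=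
    Finset.single_le_sum (f := fun j => Real.exp (2 * x j))
      (fun j _ => (Real.exp_pos _).le) (Finset.mem_univ i)
  have h2 : Real.exp (2 * x i) < 1 := lt_of_le_of_lt h1 hx
  have := Real.exp_lt_one_iff.1 h2
  linarith

lemma mem_ray {x b : Fin n → ℝ} (hx : x ∈ C0 n) (hb : ∀ i, 0 ≤ b i) {t : ℝ} (ht : t ≤ 0) :
    x + t • b ∈ C0 n := by
  refine C0_mono (fun i => ?_) hx
  have : t * b i ≤ 0 := mul_nonpos_of_nonpos_of_nonneg ht (hb i)
  simp only [Pi.add_apply, Pi.smul_apply, smul_eq_mul]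
  linarith

def sl (h : (Fin n → ℝ) → ℝ) (x b : Fin n → ℝ) (t : ℝ) : ℝ := (h (x + t • b) - h x) / t

def slm (h : (Fin n → ℝ) → ℝ) (x b : Fin n → ℝ) (t : ℝ) : ℝ := sl h x b (min t (-1))

def Lval (h : (Fin n → ℝ) → ℝ) (x b : Fin n → ℝ) : ℝ := ⨅ t : ℝ, slm h x b t

section Slope

variable {h : (Fin n → ℝ) → ℝ} {x b : Fin n → ℝ}

lemma tendsto_const_div_atBot (c : ℝ) : Tendsto (fun t : ℝ => c / t) atBot (𝓝 0) := by
  have : Tendsto (fun t : ℝ => (-c) / (-t)) atBot (𝓝 0) :=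
    Tendsto.div_atTop tendsto_const_nhds tendsto_neg_atBot_atTop
  simpa [neg_div_neg_eq] using this

lemma ray_convexOn (hconv : ConvexOn ℝ (C0 n) h) (hx : x ∈ C0 n) (hb : ∀ i, 0 ≤ b i) :
    ConvexOn ℝ (Iic (0:ℝ)) (fun t => h (x + t • b)) := by
  have hA := hconv.comp_affineMap (AffineMap.lineMap (x : Fin n → ℝ) (x + b))
  have hsub : (Iic (0:ℝ)) ⊆ (AffineMap.lineMap (x : Fin n → ℝ) (x + b)) ⁻¹' (C0 n) := by
    intro t ht
    have : AffineMap.lineMap (x : Fin n → ℝ) (x + b) t = x + t • b := by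
      simp [AffineMap.lineMap_apply, add_comm]
    simp only [Set.mem_preimage, this]
    exact mem_ray hx hb ht
  have := (hA.subset hsub (convex_Iic 0))
  have heq : ∀ t : ℝ, (h ∘ (AffineMap.lineMap (x : Fin n → ℝ) (x + b))) t = h (x + t • b) := by
    intro t; simp [AffineMap.lineMap_apply, add_comm]
  exact this.congr fun t _ => heq t

lemma sl_mono (hconv : ConvexOn ℝ (C0 n) h) (hx : x ∈ C0 n) (hb : ∀ i, 0 ≤ b i)
    {t t' : ℝ} (h1 : t ≤ t') (h0 : t < 0) (h2 : t' < 0) : sl h x b t ≤ sl h x b t' := by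
  have hray := ray_convexOn hconv hx hb
  have := hray.secant_mono (a := 0) (x := t) (y := t')
    (by simp) (le_of_lt h0) (le_of_lt h2) (ne_of_lt h0) (ne_of_lt h2) h1
  simpa [sl, sub_zero, zero_smul] using this

lemma sl_nonneg (hmono : ∀ u ∈ C0 n, ∀ v ∈ C0 n, (∀ i, u i ≤ v i) → h u ≤ h v)
    (hx : x ∈ C0 n) (hb : ∀ i, 0 ≤ b i) {t : ℝ} (ht : t < 0) : 0 ≤ sl h x b t := by
  have hmem := mem_ray hx hb (le_of_lt ht)
  have hle : h (x + t • b) ≤ h x := by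
    refine hmono _ hmem _ hx fun i => ?_
    have : t * b i ≤ 0 := mul_nonpos_of_nonpos_of_nonneg (le_of_lt ht) (hb i)
    simp only [Pi.add_apply, Pi.smul_apply, smul_eq_mul]
    linarith
  have hnum : h (x + t • b) - h x ≤ 0 := by linarith
  rw [sl, div_nonneg_iff]
  right; exact ⟨hnum, le_of_lt ht⟩

lemma slm_monotone (hconv : ConvexOn ℝ (C0 n) h) (hx : x ∈ C0 n) (hb : ∀ i, 0 ≤ b i) :
    Monotone (slm h x b) := by
  intro t t' htt
  exact sl_mono hconv hx hb (min_le_min htt le_rfl)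
    (lt_of_le_of_lt (min_le_right _ _) (by norm_num))
    (lt_of_le_of_lt (min_le_right _ _) (by norm_num))

lemma slm_bddBelow (hmono : ∀ u ∈ C0 n, ∀ v ∈ C0 n, (∀ i, u i ≤ v i) → h u ≤ h v)
    (hx : x ∈ C0 n) (hb : ∀ i, 0 ≤ b i) : BddBelow (Set.range (slm h x b)) := by
  refine ⟨0, ?_⟩
  rintro r ⟨t, rfl⟩
  exact sl_nonneg hmono hx hb (lt_of_le_of_lt (min_le_right _ _) (by norm_num))

lemma Lval_nonneg (hmono : ∀ u ∈ C0 n, ∀ v ∈ C0 n, (∀ i, u i ≤ v i) → h u ≤ h v)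
    (hx : x ∈ C0 n) (hb : ∀ i, 0 ≤ b i) : 0 ≤ Lval h x b :=
  le_ciInf fun t => sl_nonneg hmono hx hb (lt_of_le_of_lt (min_le_right _ _) (by norm_num))

lemma tendsto_slm (hconv : ConvexOn ℝ (C0 n) h)
    (hmono : ∀ u ∈ C0 n, ∀ v ∈ C0 n, (∀ i, u i ≤ v i) → h u ≤ h v)
    (hx : x ∈ C0 n) (hb : ∀ i, 0 ≤ b i) :
    Tendsto (slm h x b) atBot (𝓝 (Lval h x b)) :=
  tendsto_atBot_ciInf (slm_monotone hconv hx hb) (slm_bddBelow hmono hx hb)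

lemma Lval_le_sl (hconv : ConvexOn ℝ (C0 n) h)
    (hmono : ∀ u ∈ C0 n, ∀ v ∈ C0 n, (∀ i, u i ≤ v i) → h u ≤ h v)
    (hx : x ∈ C0 n) (hb : ∀ i, 0 ≤ b i) {t : ℝ} (ht : t < 0) : Lval h x b ≤ sl h x b t := by
  have h1 : Lval h x b ≤ slm h x b t := ciInf_le (slm_bddBelow hmono hx hb) t
  exact h1.trans (sl_mono hconv hx hb (min_le_left _ _)
    (lt_of_le_of_lt (min_le_right _ _) (by norm_num)) ht)

lemma chord (hconv : ConvexOn ℝ (C0 n) h)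
    (hmono : ∀ u ∈ C0 n, ∀ v ∈ C0 n, (∀ i, u i ≤ v i) → h u ≤ h v)
    (hx : x ∈ C0 n) (hb : ∀ i, 0 ≤ b i) {t : ℝ} (ht : t < 0) :
    h (x + t • b) ≤ h x + Lval h x b * t := by
  have h1 := Lval_le_sl hconv hmono hx hb (t := t) ht
  have h2 : sl h x b t * t ≤ Lval h x b * t :=
    mul_le_mul_of_nonpos_right h1 (le_of_lt ht)
  have h3 : sl h x b t * t = h (x + t • b) - h x :=
    div_mul_cancel₀ _ (ne_of_lt ht)
  linarith [h2, h3.symm.le]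

lemma tendsto_ratio (hconv : ConvexOn ℝ (C0 n) h)
    (hmono : ∀ u ∈ C0 n, ∀ v ∈ C0 n, (∀ i, u i ≤ v i) → h u ≤ h v)
    (hx : x ∈ C0 n) (hb : ∀ i, 0 ≤ b i) :
    Tendsto (fun t : ℝ => h (x + t • b) / t) atBot (𝓝 (Lval h x b)) := by
  have h1 : Tendsto (fun t : ℝ => slm h x b t + h x / t) atBot (𝓝 (Lval h x b + 0)) :=
    (tendsto_slm hconv hmono hx hb).add (tendsto_const_div_atBot (h x))
  rw [add_zero] at h1
  refine h1.congr' ?_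
  filter_upwards [eventually_le_atBot (-1 : ℝ)] with t ht
  have ht0 : t ≠ 0 := by intro h; rw [h] at ht; norm_num at ht
  have : min t (-1) = t := min_eq_left ht
  simp only [slm, sl, this]
  field_simp
  ring

lemma raySlope_eq (hconv : ConvexOn ℝ (C0 n) h)
    (hmono : ∀ u ∈ C0 n, ∀ v ∈ C0 n, (∀ i, u i ≤ v i) → h u ≤ h v)
    (hx : x ∈ C0 n) (hb : ∀ i, 0 ≤ b i) :
    raySlope n h x b = ((Lval h x b : ℝ) : EReal) := by
  have h1 : Tendsto (fun t : ℝ => ((h (x + t • b) / t : ℝ) : EReal)) atBot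
      (𝓝 ((Lval h x b : ℝ) : EReal)) :=
    (continuous_coe_real_ereal.tendsto _).comp (tendsto_ratio hconv hmono hx hb)
  exact h1.limsup_eq

end Slope
section Lmore

variable {h : (Fin n → ℝ) → ℝ} {x b : Fin n → ℝ}

lemma Lval_mono_dir (hconv : ConvexOn ℝ (C0 n) h)
    (hmono : ∀ u ∈ C0 n, ∀ v ∈ C0 n, (∀ i, u i ≤ v i) → h u ≤ h v)
    (hx : x ∈ C0 n) {b b' : Fin n → ℝ} (hb : ∀ i, 0 ≤ b i) (hb' : ∀ i, 0 ≤ b' i)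
    (hbb' : ∀ i, b i ≤ b' i) : Lval h x b ≤ Lval h x b' := by
  refine le_of_tendsto_of_tendsto (tendsto_ratio hconv hmono hx hb)
    (tendsto_ratio hconv hmono hx hb') ?_
  filter_upwards [eventually_lt_atBot (0 : ℝ)] with t ht
  have hle : h (x + t • b') ≤ h (x + t • b) := by
    refine hmono _ (mem_ray hx hb' (le_of_lt ht)) _ (mem_ray hx hb (le_of_lt ht)) fun i => ?_
    simp only [Pi.add_apply, Pi.smul_apply, smul_eq_mul]
    nlinarith [hbb' i, hb i, hb' i]
  exact div_le_div_of_nonpos_of_le (le_of_lt ht) hle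

lemma Lval_smul (hconv : ConvexOn ℝ (C0 n) h)
    (hmono : ∀ u ∈ C0 n, ∀ v ∈ C0 n, (∀ i, u i ≤ v i) → h u ≤ h v)
    (hx : x ∈ C0 n) (hb : ∀ i, 0 ≤ b i) {θ : ℝ} (hθ : 0 < θ) :
    Lval h x (θ • b) = θ * Lval h x b := by
  have hθb : ∀ i, 0 ≤ (θ • b) i := fun i => by
    simp only [Pi.smul_apply, smul_eq_mul]; exact mul_nonneg hθ.le (hb i)
  have h1 := tendsto_ratio hconv hmono hx hθb
  have hcomp : Tendsto (fun t : ℝ => t * θ) atBot atBot :=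
    Tendsto.atBot_mul_const hθ tendsto_id
  have h2 : Tendsto (fun t : ℝ => θ * (h (x + (t * θ) • b) / (t * θ))) atBot
      (𝓝 (θ * Lval h x b)) :=
    ((tendsto_ratio hconv hmono hx hb).comp hcomp).const_mul θ
  have heq : ∀ᶠ t : ℝ in atBot, θ * (h (x + (t * θ) • b) / (t * θ)) = h (x + t • (θ • b)) / t := by
    filter_upwards [eventually_lt_atBot (0 : ℝ)] with t ht
    have ht0 : t ≠ 0 := ne_of_lt ht
    have hθ0 : θ ≠ 0 := ne_of_gt hθ
    rw [smul_smul]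
    field_simp
  have h3 : Tendsto (fun t : ℝ => h (x + t • (θ • b)) / t) atBot (𝓝 (θ * Lval h x b)) :=
    Tendsto.congr' heq h2
  exact tendsto_nhds_unique h1 h3

lemma Lval_base (hconv : ConvexOn ℝ (C0 n) h)
    (hmono : ∀ u ∈ C0 n, ∀ v ∈ C0 n, (∀ i, u i ≤ v i) → h u ≤ h v)
    {a : Fin n → ℝ} (hx : x ∈ C0 n) (ha : a ∈ C0 n) (hbpos : ∀ i, 0 < b i) :
    Lval h x b = Lval h a b := by
  have hb : ∀ i, 0 ≤ b i := fun i => (hbpos i).le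
  set s : ℝ := ∑ i, |x i - a i| / b i with hs_def
  have hs0 : 0 ≤ s := Finset.sum_nonneg fun i _ => div_nonneg (abs_nonneg _) (hb i)
  have hs : ∀ i, |x i - a i| ≤ s * b i := by
    intro i
    have h1 : |x i - a i| / b i ≤ s :=
      Finset.single_le_sum (f := fun j => |x j - a j| / b j)
        (fun j _ => div_nonneg (abs_nonneg _) (hb j)) (Finset.mem_univ i)
    calc |x i - a i| = |x i - a i| / b i * b i :=
          (div_mul_cancel₀ _ (ne_of_gt (hbpos i))).symm
      _ ≤ s * b i := mul_le_mul_of_nonneg_right h1 (hb i)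
  -- the two comparison limits
  have hshift : ∀ s' : ℝ, Tendsto (fun t : ℝ => h (a + (t + s') • b) / t) atBot
      (𝓝 (Lval h a b)) := by
    intro s'
    have hcomp : Tendsto (fun t : ℝ => t + s') atBot atBot :=
      tendsto_atBot_add_const_right _ s' tendsto_id
    have h1 : Tendsto (fun t : ℝ => (h (a + (t + s') • b) / (t + s')) * ((t + s') / t)) atBot
        (𝓝 (Lval h a b * 1)) := by
      refine Tendsto.mul ((tendsto_ratio hconv hmono ha hb).comp hcomp) ?_
      have h2 : Tendsto (fun t : ℝ => 1 + s' / t) atBot (𝓝 (1 + 0)) :=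
        tendsto_const_nhds.add (tendsto_const_div_atBot s')
      rw [add_zero] at h2
      refine h2.congr' ?_
      filter_upwards [eventually_lt_atBot (0 : ℝ)] with t ht
      have ht0 : t ≠ 0 := ne_of_lt ht
      field_simp
    rw [mul_one] at h1
    refine h1.congr' ?_
    filter_upwards [eventually_lt_atBot (min (-s') 0)] with t ht
    have ht1 : t + s' < 0 := by
      have := lt_of_lt_of_le ht (min_le_left _ _); linarith
    have ht0 : t ≠ 0 := ne_of_lt (lt_of_lt_of_le ht (min_le_right _ _))
    have ht1' : t + s' ≠ 0 := ne_of_lt ht1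
    field_simp
  have hlower : ∀ᶠ t : ℝ in atBot, h (a + (t + s) • b) / t ≤ h (x + t • b) / t := by
    filter_upwards [eventually_le_atBot (-s : ℝ), eventually_lt_atBot (0 : ℝ)] with t hts ht0
    have hmem1 : x + t • b ∈ C0 n := mem_ray hx hb (le_of_lt ht0)
    have hmem2 : a + (t + s) • b ∈ C0 n := mem_ray ha hb (by linarith)
    have hle : h (x + t • b) ≤ h (a + (t + s) • b) := by
      refine hmono _ hmem1 _ hmem2 fun i => ?_
      simp only [Pi.add_apply, Pi.smul_apply, smul_eq_mul]
      have h2 := hs i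
      have h3 : x i - a i ≤ |x i - a i| := le_abs_self _
      nlinarith [hb i]
    exact div_le_div_of_nonpos_of_le (le_of_lt ht0) hle
  have hupper : ∀ᶠ t : ℝ in atBot, h (x + t • b) / t ≤ h (a + (t - s) • b) / t := by
    filter_upwards [eventually_le_atBot (0 : ℝ), eventually_lt_atBot (0 : ℝ)] with t hts ht0
    have hmem1 : x + t • b ∈ C0 n := mem_ray hx hb (le_of_lt ht0)
    have hmem2 : a + (t - s) • b ∈ C0 n := mem_ray ha hb (by linarith)
    have hle : h (a + (t - s) • b) ≤ h (x + t • b) := by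
      refine hmono _ hmem2 _ hmem1 fun i => ?_
      simp only [Pi.add_apply, Pi.smul_apply, smul_eq_mul]
      have h2 := hs i
      have h3 : a i - x i ≤ |x i - a i| := by
        rw [abs_sub_comm]; exact le_abs_self _
      nlinarith [hb i]
    exact div_le_div_of_nonpos_of_le (le_of_lt ht0) hle
  have hsq : Tendsto (fun t : ℝ => h (x + t • b) / t) atBot (𝓝 (Lval h a b)) := by
    have hup : Tendsto (fun t : ℝ => h (a + (t - s) • b) / t) atBot (𝓝 (Lval h a b)) := by
      have := hshift (-s)
      simpa [sub_eq_add_neg] using this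
    exact tendsto_of_tendsto_of_tendsto_of_le_of_le' (hshift s) hup hlower hupper
  exact tendsto_nhds_unique (tendsto_ratio hconv hmono hx hb) hsq

end Lmore
section Nonpos

variable {h : (Fin n → ℝ) → ℝ}

lemma nonpos_on_C0 (hn : n ≠ 0)
    (hmono : ∀ u ∈ C0 n, ∀ v ∈ C0 n, (∀ i, u i ≤ v i) → h u ≤ h v)
    (hbd : ∀ z ∈ frontier (C0 n), Tendsto h (𝓝[C0 n] z) (𝓝 (0:ℝ)))
    {x : Fin n → ℝ} (hx : x ∈ C0 n) : h x ≤ 0 := by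
  haveI : Nonempty (Fin n) := ⟨⟨0, Nat.pos_of_ne_zero hn⟩⟩
  set S : ℝ := ∑ i, Real.exp (2 * x i) with hS_def
  have hS0 : 0 < S :=
    Finset.sum_pos (fun i _ => Real.exp_pos _) Finset.univ_nonempty
  have hS1 : S < 1 := hx
  set T : ℝ := -Real.log S / 2 with hT_def
  have hT : 0 < T := by
    have := Real.log_neg hS0 hS1
    rw [hT_def]; linarith
  set p : ℝ → (Fin n → ℝ) := fun t => x + t • (fun _ => (1:ℝ)) with hp_def
  have hpcont : Continuous p := continuous_const.add (continuous_id.smul continuous_const)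
  have hsum : ∀ t : ℝ, ∑ i, Real.exp (2 * (p t) i) = Real.exp (2 * t) * S := by
    intro t
    rw [hS_def, Finset.mul_sum]
    refine Finset.sum_congr rfl fun i _ => ?_
    rw [← Real.exp_add]
    congr 1
    simp [hp_def]
    ring
  have hmem : ∀ t : ℝ, t < T → p t ∈ C0 n := by
    intro t ht
    have h1 : Real.exp (2 * t) < Real.exp (-Real.log S) := by
      apply Real.exp_lt_exp.2
      rw [hT_def] at ht; linarith
    have h2 : Real.exp (-Real.log S) = S⁻¹ := by
      rw [Real.exp_neg, Real.exp_log hS0]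
    show ∑ i, Real.exp (2 * (p t) i) < 1
    rw [hsum t]
    calc Real.exp (2 * t) * S < S⁻¹ * S := by
          apply mul_lt_mul_of_pos_right _ hS0
          rw [← h2]; exact h1
      _ = 1 := inv_mul_cancel₀ (ne_of_gt hS0)
  have hznot : p T ∉ C0 n := by
    show ¬ (∑ i, Real.exp (2 * (p T) i) < 1)
    rw [hsum T]
    have : 2 * T = -Real.log S := by rw [hT_def]; ring
    rw [this, Real.exp_neg, Real.exp_log hS0, inv_mul_cancel₀ (ne_of_gt hS0)]
    exact lt_irrefl 1
  have htend : Tendsto p (𝓝[<] T) (𝓝 (p T)) :=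
    (hpcont.tendsto T).mono_left nhdsWithin_le_nhds
  have hmem_ev : ∀ᶠ t in 𝓝[<] T, p t ∈ C0 n := by
    filter_upwards [self_mem_nhdsWithin] with t ht
    exact hmem t ht
  have hzfront : p T ∈ frontier (C0 n) := by
    rw [frontier, (isOpen_C0 (n := n)).interior_eq]
    exact ⟨mem_closure_of_tendsto htend hmem_ev, hznot⟩
  have htend2 : Tendsto p (𝓝[<] T) (𝓝[C0 n] (p T)) :=
    tendsto_nhdsWithin_iff.mpr ⟨htend, hmem_ev⟩
  have hlim : Tendsto (fun t => h (p t)) (𝓝[<] T) (𝓝 (0:ℝ)) :=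
    (hbd (p T) hzfront).comp htend2
  refine ge_of_tendsto hlim ?_
  have hIoo : Ioo (0:ℝ) T ∈ 𝓝[<] T := Ioo_mem_nhdsLT_of_mem ⟨hT, le_rfl⟩
  filter_upwards [hIoo] with t ht
  refine hmono x hx (p t) (hmem t ht.2) fun i => ?_
  simp only [hp_def, Pi.add_apply, Pi.smul_apply, smul_eq_mul, mul_one]
  linarith [ht.1]

end Nonpos

section Subgrad

variable {h : (Fin n → ℝ) → ℝ}

lemma exists_subgrad (hconv : ConvexOn ℝ (C0 n) h) {x : Fin n → ℝ} (hx : x ∈ C0 n) :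
    ∃ p : (Fin n → ℝ) →L[ℝ] ℝ, ∀ y ∈ C0 n, h x + p (y - x) ≤ h y := by
  have hcont : ContinuousOn h (C0 n) := hconv.continuousOn isOpen_C0
  set S : Set ((Fin n → ℝ) × ℝ) := {q | q.1 ∈ C0 n ∧ h q.1 < q.2} with hS_def
  have hSconv : Convex ℝ S := hconv.convex_strict_epigraph
  have hSopen : IsOpen S := by
    have h1 : IsOpen ((Prod.fst ⁻¹' C0 n : Set ((Fin n → ℝ) × ℝ)) ∩
        (fun q : (Fin n → ℝ) × ℝ => h q.1 - q.2) ⁻¹' Iio 0) := by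
      refine ContinuousOn.isOpen_inter_preimage ?_ (isOpen_C0.preimage continuous_fst) isOpen_Iio
      exact (hcont.comp continuous_fst.continuousOn fun q hq => hq).sub
        continuous_snd.continuousOn
    convert h1 using 1
    ext q
    simp [hS_def, sub_neg]
  have hxs : (x, h x) ∉ S := fun hq => lt_irrefl _ hq.2
  obtain ⟨φ, hφ⟩ := geometric_hahn_banach_open_point hSconv hSopen hxs
  set β : ℝ := φ (0, 1) with hβ_def
  have hφ_split : ∀ (y : Fin n → ℝ) (r : ℝ), φ (y, r) = φ (y, 0) + r * β := by
    intro y r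
    have : (y, r) = (y, (0:ℝ)) + r • ((0 : Fin n → ℝ), (1:ℝ)) := by
      simp [Prod.ext_iff]
    rw [this, map_add, φ.map_smul]
    simp [hβ_def, smul_eq_mul]
  have hβ : β < 0 := by
    have h1 := hφ (x, h x + 1) ⟨hx, by show h x < h x + 1; linarith⟩
    rw [hφ_split x (h x + 1), hφ_split x (h x)] at h1
    linarith
  have key : ∀ y ∈ C0 n, φ (y, 0) + h y * β ≤ φ (x, 0) + h x * β := by
    intro y hy
    have hr : ∀ ε > 0, φ (y, 0) + (h y + ε) * β < φ (x, 0) + h x * β := by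
      intro ε hε
      have := hφ (y, h y + ε) ⟨hy, by show h y < h y + ε; linarith⟩
      rw [hφ_split y (h y + ε), hφ_split x (h x)] at this
      exact this
    by_contra hc
    push_neg at hc
    set A := φ (y, 0) + h y * β
    set B := φ (x, 0) + h x * β
    have hAB : B < A := hc
    have hβ' : (0:ℝ) < -β := by linarith
    have hε : 0 < (A - B) / (-β) := div_pos (by linarith) hβ'
    have h2 := hr _ hε
    have h3 : φ (y, 0) + (h y + (A - B) / (-β)) * β = A + ((A - B) / (-β)) * β := by
      simp only [A]; ring
    rw [h3] at h2
    have h4 : ((A - B) / (-β)) * β = -(A - B) := by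
      rw [div_mul_eq_mul_div, div_neg, mul_div_assoc, div_self (ne_of_lt hβ)]
      ring
    rw [h4] at h2
    simp only [B] at h2
    linarith
  set plin : (Fin n → ℝ) →L[ℝ] ℝ :=
    (-β)⁻¹ • (φ.comp (ContinuousLinearMap.inl ℝ (Fin n → ℝ) ℝ)) with hplin_def
  refine ⟨plin, fun y hy => ?_⟩
  have h1 : plin (y - x) = (-β)⁻¹ * (φ (y, 0) - φ (x, 0)) := by
    simp only [hplin_def, ContinuousLinearMap.smul_apply, ContinuousLinearMap.comp_apply,
      ContinuousLinearMap.inl_apply, smul_eq_mul]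
    congr 1
    have : ((y - x : Fin n → ℝ), (0:ℝ)) = (y, (0:ℝ)) - (x, (0:ℝ)) := by
      simp [Prod.ext_iff]
    rw [this, map_sub]
  have h2 := key y hy
  have hβ' : (0:ℝ) < -β := by linarith
  have h3 : φ (y, 0) - φ (x, 0) ≤ (h y - h x) * (-β) := by nlinarith [h2]
  have h4 : plin (y - x) ≤ h y - h x := by
    rw [h1]
    rw [inv_mul_le_iff₀ hβ']
    calc φ (y, 0) - φ (x, 0) ≤ (h y - h x) * (-β) := h3
      _ = (-β) * (h y - h x) := by ring
  linarith

lemma subgrad_nonneg (hmono : ∀ u ∈ C0 n, ∀ v ∈ C0 n, (∀ i, u i ≤ v i) → h u ≤ h v)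
    {x : Fin n → ℝ} (hx : x ∈ C0 n) {p : (Fin n → ℝ) →L[ℝ] ℝ}
    (hp : ∀ y ∈ C0 n, h x + p (y - x) ≤ h y)
    {v : Fin n → ℝ} (hv : ∀ i, 0 ≤ v i) : 0 ≤ p v := by
  have hy : x - v ∈ C0 n := C0_mono (fun i => by
    simp only [Pi.sub_apply]; linarith [hv i]) hx
  have h1 := hp (x - v) hy
  have h2 : h (x - v) ≤ h x := hmono _ hy _ hx fun i => by
    simp only [Pi.sub_apply]; linarith [hv i]
  have h3 : (x - v) - x = -v := by abel
  rw [h3, map_neg] at h1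
  linarith

end Subgrad
section Bounded

variable {g : (Fin n → ℝ) → ℝ}

lemma bounded_below (hgconv : ConvexOn ℝ (C0 n) g)
    (hgmono : ∀ u ∈ C0 n, ∀ v ∈ C0 n, (∀ i, u i ≤ v i) → g u ≤ g v)
    {x : Fin n → ℝ} (hx : x ∈ C0 n) (p : (Fin n → ℝ) →L[ℝ] ℝ)
    (hp0 : ∀ v : Fin n → ℝ, (∀ i, 0 ≤ v i) → 0 ≤ p v)
    (hpL : ∀ v : Fin n → ℝ, (∀ i, 0 ≤ v i) → Lval g x v ≤ p v)
    {ε : ℝ} (hε : 0 < ε) :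
    ∃ c : ℝ, ∀ y ∈ C0 n, p (y - x) + ε * ∑ i, (y i - x i) ≤ g y + c := by
  have hgcont : ContinuousOn g (C0 n) := hgconv.continuousOn isOpen_C0
  set q : (Fin n → ℝ) → ℝ := fun v => p v + ε * ∑ i, v i with hq_def
  have hq_cont : Continuous q := p.continuous.add
    (continuous_const.mul (continuous_finset_sum _ fun i _ => continuous_apply i))
  have hq_add : ∀ v w, q (v + w) = q v + q w := by
    intro v w
    simp only [hq_def, map_add, Pi.add_apply, Finset.sum_add_distrib]
    ring
  have hq_smul : ∀ (t : ℝ) v, q (t • v) = t * q v := by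
    intro t v
    simp only [hq_def, p.map_smul, smul_eq_mul, Pi.smul_apply, ← Finset.mul_sum]
    ring
  have hq_mono : ∀ v w : Fin n → ℝ, (∀ i, 0 ≤ v i) → (∀ i, v i ≤ w i) → q v ≤ q w := by
    intro v w hv hvw
    have h1 : q w = q v + q (w - v) := by
      rw [← hq_add]; congr 1; abel
    have h2 : 0 ≤ q (w - v) := by
      have hp' := hp0 (w - v) (fun i => by simp only [Pi.sub_apply]; linarith [hvw i])
      have hs : 0 ≤ ∑ i, (w - v) i :=
        Finset.sum_nonneg fun i _ => by simp only [Pi.sub_apply]; linarith [hvw i]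
      simp only [hq_def]
      have : 0 ≤ ε * ∑ i, (w - v) i := mul_nonneg hε.le hs
      linarith
    linarith
  -- the compact set of directions
  set K : Set (Fin n → ℝ) := {u | (∀ i, u i ≤ 0) ∧ ∑ i, u i = -1} with hK_def
  have hKC0 : ∀ u ∈ K, ∀ R : ℝ, 0 ≤ R → x + R • u ∈ C0 n := by
    intro u hu R hR
    refine C0_mono (fun i => ?_) hx
    have := hu.1 i
    have : R * u i ≤ 0 := mul_nonpos_of_nonneg_of_nonpos hR this
    simp only [Pi.add_apply, Pi.smul_apply, smul_eq_mul]
    linarith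
  have hKclosed : IsClosed K := by
    have h1 : IsClosed {u : Fin n → ℝ | ∀ i, u i ≤ 0} := by
      have : {u : Fin n → ℝ | ∀ i, u i ≤ 0} = ⋂ i, {u | u i ≤ 0} := by
        ext u; simp
      rw [this]
      exact isClosed_iInter fun i => isClosed_le (continuous_apply i) continuous_const
    have h2 : IsClosed {u : Fin n → ℝ | ∑ i, u i = -1} :=
      isClosed_eq (continuous_finset_sum _ fun i _ => continuous_apply i) continuous_const
    exact h1.inter h2
  have hKsub : K ⊆ closedBall 0 1 := by
    intro u hu
    rw [mem_closedBall_zero_iff]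
    rw [pi_norm_le_iff_of_nonneg (by norm_num : (0:ℝ) ≤ 1)]
    intro i
    have h1 := hu.1 i
    have h2 : -u i ≤ ∑ j, -u j := by
      refine Finset.single_le_sum (f := fun j => -u j)
        (fun j _ => by simpa using neg_nonneg.mpr (hu.1 j)) (Finset.mem_univ i)
    have h3 : ∑ j, -u j = 1 := by
      rw [Finset.sum_neg_distrib, hu.2]; norm_num
    rw [Real.norm_eq_abs, abs_of_nonpos h1]
    linarith
  have hKcompact : IsCompact K :=
    (isCompact_closedBall 0 1).of_isClosed_subset hKclosed hKsub
  -- the chord slope function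
  set cu : (Fin n → ℝ) → ℝ → ℝ := fun u R => (g (x + R • u) - g x) / R with hcu_def
  have hcu_sl : ∀ u ∈ K, ∀ R : ℝ, 0 < R → cu u R = - sl g x (-u) (-R) := by
    intro u hu R hR
    simp only [hcu_def, sl, neg_smul_neg, neg_div, neg_neg]
    rw [div_neg, neg_neg]
  have hneg_mem : ∀ u ∈ K, ∀ i, 0 ≤ (-u) i := fun u hu i => by
    simp only [Pi.neg_apply]; linarith [hu.1 i]
  have hcu_mono : ∀ u ∈ K, ∀ R R' : ℝ, 0 < R → R ≤ R' → cu u R ≤ cu u R' := by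
    intro u hu R R' hR hRR'
    rw [hcu_sl u hu R hR, hcu_sl u hu R' (lt_of_lt_of_le hR hRR')]
    have := sl_mono hgconv hx (hneg_mem u hu) (t := -R') (t' := -R)
      (by linarith) (by linarith) (by linarith)
    linarith
  -- the gap
  have hgap : ∀ u ∈ K, q u + ε ≤ - Lval g x (-u) := by
    intro u hu
    have h1 : Lval g x (-u) ≤ p (-u) := hpL (-u) (hneg_mem u hu)
    have h2 : p (-u) = - p u := by rw [map_neg]
    have h3 : q u + ε = p u := by
      simp only [hq_def, hu.2]; ring
    linarith
  -- find uniform radius via compactness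
  set F : ℕ → Set (Fin n → ℝ) :=
    fun k => {u ∈ K | cu u ((k:ℝ)+1) ≤ q u + ε/2} with hF_def
  have hFclosed : ∀ k, IsClosed (F k) := by
    intro k
    have hmaps : ∀ u ∈ K, x + ((k:ℝ)+1) • u ∈ C0 n :=
      fun u hu => hKC0 u hu _ (by positivity)
    have hcont : ContinuousOn (fun u => cu u ((k:ℝ)+1) - q u) K := by
      refine ContinuousOn.sub ?_ hq_cont.continuousOn
      refine ContinuousOn.div_const ?_ _
      refine ContinuousOn.sub ?_ continuousOn_const
      refine hgcont.comp ?_ hmaps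
      exact (continuous_const.add ((continuous_const : Continuous fun _ : Fin n → ℝ => ((k:ℝ)+1)).smul continuous_id)).continuousOn
    have : F k = K ∩ (fun u => cu u ((k:ℝ)+1) - q u) ⁻¹' (Iic (ε/2)) := by
      ext u
      simp only [hF_def, Set.mem_setOf_eq, Set.mem_inter_iff, Set.mem_preimage, Set.mem_Iic]
      constructor
      · rintro ⟨h1, h2⟩; exact ⟨h1, by linarith⟩
      · rintro ⟨h1, h2⟩; exact ⟨h1, by linarith⟩
    rw [this]
    exact hcont.preimage_isClosed_of_isClosed hKclosed isClosed_Iic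
  have hFanti : ∀ k, F (k+1) ⊆ F k := by
    intro k u hu
    refine ⟨hu.1, le_trans ?_ hu.2⟩
    refine hcu_mono u hu.1 _ _ (by positivity) ?_
    have : ((k:ℝ)+1) ≤ ((k+1:ℕ):ℝ)+1 := by push_cast; linarith
    linarith
  have hFempty : ∃ k, F k = ∅ := by
    by_contra hc
    push_neg at hc
    have hne : ∀ k, (F k).Nonempty := hc
    have hFcompact : IsCompact (F 0) :=
      hKcompact.of_isClosed_subset (hFclosed 0) (Set.sep_subset _ _)
    obtain ⟨u, hu⟩ := IsCompact.nonempty_iInter_of_sequence_nonempty_isCompact_isClosed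
      F hFanti hne hFcompact hFclosed
    simp only [Set.mem_iInter] at hu
    have huK : u ∈ K := (hu 0).1
    -- the limit of cu u (k+1) is - Lval g x (-u)
    have hlim : Tendsto (fun k : ℕ => sl g x (-u) (-((k:ℝ)+1))) atTop (𝓝 (Lval g x (-u))) := by
      have hcomp : Tendsto (fun k : ℕ => -((k:ℝ)+1)) atTop atBot := by
        refine tendsto_neg_atTop_atBot.comp ?_
        exact tendsto_atTop_add_const_right _ 1 tendsto_natCast_atTop_atTop
      have := (tendsto_slm hgconv hgmono hx (hneg_mem u huK)).comp hcomp
      refine this.congr fun k => ?_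
      simp only [Function.comp, slm]
      congr 1
      rw [min_eq_left (by push_cast; linarith [Nat.cast_nonneg (α := ℝ) k])]
    have hub : - q u - ε/2 ≤ Lval g x (-u) := by
      refine ge_of_tendsto hlim ?_
      filter_upwards with k
      have h1 := (hu k).2
      rw [hcu_sl u huK _ (by positivity)] at h1
      linarith
    have h9 := hgap u huK
    have h10 : Lval g x (-u) ≤ - q u - ε := by linarith
    have h11 : - q u - ε/2 ≤ - q u - ε := le_trans hub h10
    linarith
  obtain ⟨kbar, hkbar⟩ := hFempty
  have hfar : ∀ u ∈ K, q u + ε/2 < cu u ((kbar:ℝ)+1) := by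
    intro u hu
    by_contra hc
    push_neg at hc
    have : u ∈ F kbar := ⟨hu, hc⟩
    rw [hkbar] at this
    exact this.elim
  -- near region
  set Knear : Set (Fin n → ℝ) :=
    {y | (∀ i, y i ≤ x i) ∧ ∑ i, (x i - y i) ≤ (kbar:ℝ)+1} with hKnear_def
  have hKnearC0 : Knear ⊆ C0 n := fun y hy => C0_mono hy.1 hx
  have hKnear_closed : IsClosed Knear := by
    have h1 : IsClosed {y : Fin n → ℝ | ∀ i, y i ≤ x i} := by
      have : {y : Fin n → ℝ | ∀ i, y i ≤ x i} = ⋂ i, {y | y i ≤ x i} := by ext y; simp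
      rw [this]
      exact isClosed_iInter fun i => isClosed_le (continuous_apply i) continuous_const
    have h2 : IsClosed {y : Fin n → ℝ | ∑ i, (x i - y i) ≤ (kbar:ℝ)+1} :=
      isClosed_le (continuous_finset_sum _ fun i _ =>
        continuous_const.sub (continuous_apply i)) continuous_const
    exact h1.inter h2
  have hKnear_sub : Knear ⊆ closedBall x ((kbar:ℝ)+1) := by
    intro y hy
    rw [mem_closedBall, dist_comm, dist_eq_norm]
    rw [pi_norm_le_iff_of_nonneg (by positivity)]
    intro i
    have h1 := hy.1 i
    have h2 : x i - y i ≤ ∑ j, (x j - y j) :=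
      Finset.single_le_sum (f := fun j => x j - y j)
        (fun j _ => by simpa using sub_nonneg.mpr (hy.1 j)) (Finset.mem_univ i)
    rw [Pi.sub_apply, Real.norm_eq_abs, abs_of_nonneg (by linarith)]
    linarith [hy.2]
  have hKnear_compact : IsCompact Knear :=
    (isCompact_closedBall x _).of_isClosed_subset hKnear_closed hKnear_sub
  have hKnear_ne : Knear.Nonempty := ⟨x, fun i => le_rfl, by simp; positivity⟩
  obtain ⟨z, hzK, hz⟩ := hKnear_compact.exists_isMaxOn hKnear_ne
    (((hq_cont.comp (continuous_id.sub continuous_const)).continuousOn).sub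
      (hgcont.mono hKnearC0))
  set c1 : ℝ := q (z - x) - g z with hc1_def
  have hnear : ∀ y ∈ Knear, q (y - x) - g y ≤ c1 := fun y hy => hz hy
  -- combine on the lower set
  have hlower : ∀ y ∈ C0 n, (∀ i, y i ≤ x i) → q (y - x) - g y ≤ max c1 (- g x) := by
    intro y hy hyx
    set R : ℝ := ∑ i, (x i - y i) with hR_def
    have hR0 : 0 ≤ R := Finset.sum_nonneg fun i _ => by linarith [hyx i]
    by_cases hcase : R ≤ (kbar:ℝ)+1
    · exact le_trans (hnear y ⟨hyx, hcase⟩) (le_max_left _ _)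
    · push_neg at hcase
      have hRpos : 0 < R := lt_trans (by positivity : (0:ℝ) < (kbar:ℝ)+1) hcase
      set u : Fin n → ℝ := R⁻¹ • (y - x) with hu_def
      have huK : u ∈ K := by
        constructor
        · intro i
          simp only [hu_def, Pi.smul_apply, smul_eq_mul, Pi.sub_apply]
          have := hyx i
          have h2 : y i - x i ≤ 0 := by linarith
          exact mul_nonpos_of_nonneg_of_nonpos (by positivity) h2
        · simp only [hu_def, Pi.smul_apply, smul_eq_mul, Pi.sub_apply, ← Finset.mul_sum]
          have : ∑ i, (y i - x i) = -R := by
            rw [hR_def, ← Finset.sum_neg_distrib]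
            refine Finset.sum_congr rfl fun i _ => by ring
          rw [this]
          field_simp
      have hyeq : y = x + R • u := by
        simp only [hu_def, smul_smul, mul_inv_cancel₀ (ne_of_gt hRpos), one_smul]
        abel
      have h1 : q u + ε/2 < cu u ((kbar:ℝ)+1) := hfar u huK
      have h2 : cu u ((kbar:ℝ)+1) ≤ cu u R := hcu_mono u huK _ _ (by positivity) hcase.le
      have h3 : g y - g x = R * cu u R := by
        rw [hyeq, hcu_def]
        field_simp
      have h4 : q (y - x) = R * q u := by
        have : y - x = R • u := by rw [hyeq]; abel
        rw [this, hq_smul]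
      have h5 : R * (q u + ε/2) ≤ R * cu u R :=
        mul_le_mul_of_nonneg_left (by linarith) hR0
      have h6 : R * q u ≤ R * (q u + ε/2) := by nlinarith
      have hqle : R * q u ≤ R * cu u R := le_trans h6 h5
      have hfin : q (y - x) - g y ≤ - g x := by
        rw [h4]
        linarith [h3, hqle]
      exact le_trans hfin (le_max_right _ _)
  -- general y via the reduction y' = min(y, x)
  refine ⟨max c1 (- g x) + q (-x), fun y hy => ?_⟩
  set y' : Fin n → ℝ := fun i => min (y i) (x i) with hy'_def
  have hy'C0 : y' ∈ C0 n := C0_mono (fun i => min_le_right _ _) hx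
  have hy'le : ∀ i, y' i ≤ y i := fun i => min_le_left _ _
  have hgy' : g y' ≤ g y := hgmono _ hy'C0 _ hy hy'le
  have hsplit : q (y - x) = q (y' - x) + q (y - y') := by
    rw [← hq_add]; congr 1; abel
  have hbd1 : q (y - y') ≤ q (-x) := by
    refine hq_mono _ _ (fun i => by simp only [Pi.sub_apply, hy'_def]; linarith [min_le_left (y i) (x i)]) ?_
    intro i
    simp only [Pi.sub_apply, Pi.neg_apply, hy'_def]
    rcases le_or_gt (y i) (x i) with hle | hlt
    · rw [min_eq_left hle]
      simp only [sub_self]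
      linarith [C0_neg hx i]
    · rw [min_eq_right hlt.le]
      linarith [C0_neg hy i]
  have hbd2 : q (y' - x) - g y' ≤ max c1 (- g x) :=
    hlower y' hy'C0 (fun i => min_le_right _ _)
  have goal : q (y - x) ≤ g y + (max c1 (- g x) + q (-x)) := by
    rw [hsplit]
    linarith
  simpa only [hq_def, Pi.sub_apply] using goal

end Bounded
section Chain

variable {f g : (Fin n → ℝ) → ℝ}

lemma Lval_zero_of_nzero (hn : n = 0) (h : (Fin n → ℝ) → ℝ) (x b : Fin n → ℝ) :
    Lval h x b = 0 := by
  subst hn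
  have hsl : ∀ t : ℝ, slm h x b t = 0 := by
    intro t
    have hxx : x + (min t (-1)) • b = x := Subsingleton.elim _ _
    simp only [slm, sl]
    rw [hxx, sub_self, zero_div]
  simp only [Lval]
  rw [funext hsl]
  exact ciInf_const

lemma Lval_f_le_subgrad (hfconv : ConvexOn ℝ (C0 n) f)
    (hfmono : ∀ u ∈ C0 n, ∀ v ∈ C0 n, (∀ i, u i ≤ v i) → f u ≤ f v)
    {x : Fin n → ℝ} (hx : x ∈ C0 n) {p : (Fin n → ℝ) →L[ℝ] ℝ}
    (hp : ∀ y ∈ C0 n, f x + p (y - x) ≤ f y)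
    {v : Fin n → ℝ} (hv : ∀ i, 0 ≤ v i) : Lval f x v ≤ p v := by
  have h1 : Lval f x v ≤ sl f x v (-1) :=
    Lval_le_sl hfconv hfmono hx hv (by norm_num)
  have h2 : sl f x v (-1) ≤ p v := by
    have hmem : x + (-1 : ℝ) • v ∈ C0 n := mem_ray hx hv (by norm_num)
    have h3 := hp _ hmem
    have h4 : (x + (-1:ℝ) • v) - x = (-1:ℝ) • v := by abel
    rw [h4, p.map_smul] at h3
    simp only [smul_eq_mul, neg_one_mul] at h3
    simp only [sl]
    rw [div_le_iff_of_neg (by norm_num : (-1:ℝ) < 0)]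
    linarith
  linarith

lemma Lval_g_le_subgrad (hfconv : ConvexOn ℝ (C0 n) f) (hgconv : ConvexOn ℝ (C0 n) g)
    (hfmono : ∀ u ∈ C0 n, ∀ v ∈ C0 n, (∀ i, u i ≤ v i) → f u ≤ f v)
    (hgmono : ∀ u ∈ C0 n, ∀ v ∈ C0 n, (∀ i, u i ≤ v i) → g u ≤ g v)
    {x : Fin n → ℝ} (hx : x ∈ C0 n)
    (h2 : ∀ b : Fin n → ℕ, (∀ i, 0 < b i) →
        Lval g x (fun i => (b i : ℝ)) ≤ Lval f x (fun i => (b i : ℝ)))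
    {p : (Fin n → ℝ) →L[ℝ] ℝ} (hp : ∀ y ∈ C0 n, f x + p (y - x) ≤ f y)
    (hp0 : ∀ w : Fin n → ℝ, (∀ i, 0 ≤ w i) → 0 ≤ p w)
    {v : Fin n → ℝ} (hv : ∀ i, 0 ≤ v i) : Lval g x v ≤ p v := by
  have hp1 : (0:ℝ) ≤ p (fun _ => 1) := hp0 _ (fun i => by norm_num)
  refine le_of_forall_pos_le_add fun η hη => ?_
  set δ : ℝ := η / (2 * (p (fun _ => 1) + 1)) with hδ_def
  have hδ : 0 < δ := div_pos hη (by linarith)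
  -- choose a common denominator N and a vector of naturals
  obtain ⟨N, hN⟩ := exists_nat_gt (1/δ)
  have hN0 : 0 < (N:ℝ) := lt_trans (div_pos one_pos hδ) hN
  have hNδ : 1 / (N:ℝ) ≤ δ := by
    rw [div_le_iff₀ hN0]
    rw [div_lt_iff₀ hδ] at hN
    nlinarith
  set w : Fin n → ℕ := fun i => ⌈(v i + δ) * N⌉₊ with hw_def
  have hwpos : ∀ i, 0 < w i := by
    intro i
    rw [hw_def]
    exact Nat.ceil_pos.2 (mul_pos (by linarith [hv i]) hN0)
  set b' : Fin n → ℝ := fun i => (w i : ℝ) with hb'_def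
  have hb'_nonneg : ∀ i, 0 ≤ b' i := fun i => Nat.cast_nonneg _
  set b'' : Fin n → ℝ := (N:ℝ)⁻¹ • b' with hb''_def
  have hb''_nonneg : ∀ i, 0 ≤ b'' i := fun i => by
    simp only [hb''_def, Pi.smul_apply, smul_eq_mul]
    positivity
  have hlow : ∀ i, v i + δ ≤ b'' i := by
    intro i
    simp only [hb''_def, hb'_def, hw_def, Pi.smul_apply, smul_eq_mul]
    rw [inv_mul_eq_div, le_div_iff₀ hN0]
    exact Nat.le_ceil _
  have hhigh : ∀ i, b'' i ≤ v i + 2 * δ := by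
    intro i
    simp only [hb''_def, hb'_def, hw_def, Pi.smul_apply, smul_eq_mul]
    rw [inv_mul_eq_div, div_le_iff₀ hN0]
    have h1 : (⌈(v i + δ) * N⌉₊ : ℝ) < (v i + δ) * N + 1 :=
      Nat.ceil_lt_add_one (mul_nonneg (by linarith [hv i]) hN0.le)
    have h2 : (v i + δ) * N + 1 ≤ (v i + 2*δ) * N := by
      have h3 : δ * N ≥ 1 := by
        rw [div_le_iff₀ hN0] at hNδ
        linarith
      nlinarith
    linarith
  have step1 : Lval g x v ≤ Lval g x b'' :=
    Lval_mono_dir hgconv hgmono hx hv hb''_nonneg (fun i => by linarith [hlow i, hδ])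
  have step2 : Lval g x b'' = (N:ℝ)⁻¹ * Lval g x b' :=
    Lval_smul hgconv hgmono hx hb'_nonneg (inv_pos.2 hN0)
  have step3 : Lval g x b' ≤ Lval f x b' := h2 w hwpos
  have step4 : (N:ℝ)⁻¹ * Lval f x b' = Lval f x b'' :=
    (Lval_smul hfconv hfmono hx hb'_nonneg (inv_pos.2 hN0)).symm
  have step5 : Lval f x b'' ≤ p b'' := Lval_f_le_subgrad hfconv hfmono hx hp hb''_nonneg
  have step6 : p b'' ≤ p v + 2 * δ * p (fun _ => 1) := by
    have h1 : p b'' = p v + p (b'' - v) := by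
      rw [← map_add]; congr 1; abel
    have h2 : p (b'' - v) ≤ p ((2*δ) • (fun _ => (1:ℝ))) := by
      have h3 : 0 ≤ p ((2*δ) • (fun _ => (1:ℝ)) - (b'' - v)) := by
        refine hp0 _ fun i => ?_
        simp only [Pi.sub_apply, Pi.smul_apply, smul_eq_mul, mul_one]
        linarith [hhigh i]
      have h4 : p ((2*δ) • (fun _ => (1:ℝ))) = p (b'' - v) + p ((2*δ) • (fun _ => (1:ℝ)) - (b'' - v)) := by
        rw [← map_add]; congr 1; abel
      linarith
    rw [p.map_smul] at h2
    simp only [smul_eq_mul] at h2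
    linarith
  have hδη : 2 * δ * p (fun _ => 1) ≤ η := by
    have key : 2 * δ * p (fun _ => 1) =
        η * (2 * p (fun _ => 1)) / (2 * ((p fun _ => 1) + 1)) := by
      rw [hδ_def]; ring
    rw [key, div_le_iff₀ (by linarith : (0:ℝ) < 2 * ((p fun _ => 1) + 1))]
    nlinarith [hη, hp1]
  have hmulle : (N:ℝ)⁻¹ * Lval g x b' ≤ (N:ℝ)⁻¹ * Lval f x b' :=
    mul_le_mul_of_nonneg_left step3 (by positivity)
  calc Lval g x v ≤ (N:ℝ)⁻¹ * Lval g x b' := by rw [← step2]; exact step1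
    _ ≤ (N:ℝ)⁻¹ * Lval f x b' := hmulle
    _ = Lval f x b'' := step4
    _ ≤ p b'' := step5
    _ ≤ p v + 2 * δ * p (fun _ => 1) := step6
    _ ≤ p v + η := by linarith

end Chain

section AffineHelper

lemma convexOn_of_affine (m : (Fin n → ℝ) → ℝ)
    (hm : ∀ (a b : ℝ) (y z : Fin n → ℝ), 0 ≤ a → 0 ≤ b → a + b = 1 →
      m (a • y + b • z) = a * m y + b * m z) :
    ConvexOn ℝ (C0 n) m := by
  refine ⟨convex_C0, fun y hy z hz a b ha hb hab => ?_⟩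
  rw [hm a b y z ha hb hab]
  simp [smul_eq_mul]

end AffineHelper

end Aux

open Aux

/-- Let `f, g` be convex functions on `C₀` increasing in each variable, with
boundary values `0` and finite along the rays where only some coordinates go to `-∞`.  Then
`lim_{c→∞} P_{C₀}(f,g+c) = f` a.e. on `C₀` iff `lim_{t→-∞} f(a+tb)/t ≥ lim_{t→-∞} g(a+tb)/t`
for all `a ∈ C₀` and all `b ∈ ℕⁿ` with positive entries. -/
theorem convEnv_tendsto_iff_raySlope (n : ℕ) (f g : (Fin n → ℝ) → ℝ)
    (hfconv : ConvexOn ℝ (C0 n) f) (hgconv : ConvexOn ℝ (C0 n) g)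
    (hfmono : ∀ x ∈ C0 n, ∀ y ∈ C0 n, (∀ i, x i ≤ y i) → f x ≤ f y)
    (hgmono : ∀ x ∈ C0 n, ∀ y ∈ C0 n, (∀ i, x i ≤ y i) → g x ≤ g y)
    (hfbd : ∀ x ∈ frontier (C0 n), Tendsto f (𝓝[C0 n] x) (𝓝 (0 : ℝ)))
    (hgbd : ∀ x ∈ frontier (C0 n), Tendsto g (𝓝[C0 n] x) (𝓝 (0 : ℝ)))
    (hfpole : ∀ x ∈ C0 n, ∀ j : Fin n, ∃ M : ℝ, ∀ t : ℝ, t ≤ 0 →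
      M ≤ f (fun i => if i = j then x i else x i + t))
    (hgpole : ∀ x ∈ C0 n, ∀ j : Fin n, ∃ M : ℝ, ∀ t : ℝ, t ≤ 0 →
      M ≤ g (fun i => if i = j then x i else x i + t)) :
    (∀ᵐ x ∂(volume.restrict (C0 n)),
        Tendsto (fun c : ℝ => convEnv n f g c x) atTop (𝓝 ((f x : ℝ) : EReal)))
      ↔ (∀ a ∈ C0 n, ∀ b : Fin n → ℕ, (∀ i, 0 < b i) →
          raySlope n g a (fun i => (b i : ℝ)) ≤ raySlope n f a (fun i => (b i : ℝ))) := by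

  have hfcont : ContinuousOn f (C0 n) := hfconv.continuousOn isOpen_C0
  constructor
  · -- (1) → (2), by contradiction
    intro h1 a ha b hbpos
    by_contra hcon
    push_neg at hcon
    set bb : Fin n → ℝ := fun i => (b i : ℝ) with hbb_def
    have hbbpos : ∀ i, 0 < bb i := fun i => by
      simp only [hbb_def]; exact_mod_cast hbpos i
    have hbb0 : ∀ i, 0 ≤ bb i := fun i => (hbbpos i).le
    rw [raySlope_eq hfconv hfmono ha hbb0, raySlope_eq hgconv hgmono ha hbb0] at hcon
    have hLfg : Lval f a bb < Lval g a bb := EReal.coe_lt_coe_iff.1 hcon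
    have hn : n ≠ 0 := by
      rintro rfl
      rw [Lval_zero_of_nzero rfl f a bb, Lval_zero_of_nzero rfl g a bb] at hLfg
      exact lt_irrefl 0 hLfg
    set Lf : ℝ := Lval f a bb with hLf_def
    set L : ℝ := Lval g a bb with hL_def
    set M : ℝ := (Lf + L)/2 with hM_def
    have hM1 : Lf < M := by rw [hM_def]; linarith
    have hM2 : M < L := by rw [hM_def]; linarith
    have hev1 : ∀ᶠ t : ℝ in atBot, f (a + t • bb)/t < M :=
      (tendsto_ratio hfconv hfmono ha hbb0).eventually_lt_const hM1
    have hev2 : ∀ᶠ t : ℝ in atBot, 1 < t * (M - L) :=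
      (Tendsto.atBot_mul_const_of_neg (by linarith : M - L < 0) tendsto_id).eventually_gt_atTop 1
    obtain ⟨t₀, ht1, ht2, ht3⟩ := (hev1.and (hev2.and (eventually_lt_atBot (0:ℝ)))).exists
    have hfa : t₀ * L + 1 < f (a + t₀ • bb) := by
      rw [div_lt_iff_of_neg ht3] at ht1
      have hid : t₀ * M = t₀ * L + t₀ * (M - L) := by ring
      nlinarith [ht1, ht2]
    set U : Set (Fin n → ℝ) := (C0 n ∩ f ⁻¹' Ioi (t₀ * L + 1)) ∩
      ((fun y : Fin n → ℝ => y + (-t₀) • bb) ⁻¹' (C0 n)) with hU_def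
    have hUopen : IsOpen U := by
      refine IsOpen.inter ?_ ?_
      · exact ContinuousOn.isOpen_inter_preimage hfcont isOpen_C0 isOpen_Ioi
      · exact isOpen_C0.preimage (continuous_id.add continuous_const)
    have hUmem : a + t₀ • bb ∈ U := by
      refine ⟨⟨mem_ray ha hbb0 ht3.le, Set.mem_preimage.2 (Set.mem_Ioi.2 hfa)⟩, ?_⟩
      have heq : a + t₀ • bb + (-t₀) • bb = a := by
        rw [add_assoc, ← add_smul]
        simp
      exact Set.mem_preimage.2 (by rw [heq]; exact ha)
    have hkey : ∀ y ∈ U, ∀ c : ℝ, convEnv n f g c y ≤ ((t₀ * L : ℝ) : EReal) := by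
      intro y hy c
      obtain ⟨⟨hyC0, hyf⟩, hyshift⟩ := hy
      refine iSup_le fun u => iSup_le fun hu => ?_
      rw [EReal.coe_le_coe_iff]
      obtain ⟨huconv, hub⟩ := hu
      set tp : ℝ := -t₀ with htp_def
      have htppos : 0 < tp := by rw [htp_def]; linarith
      have hLy : Lval g y bb = L := by
        rw [hL_def]
        exact Lval_base hgconv hgmono hyC0 ha hbbpos
      have hmem2 : y + tp • bb ∈ C0 n := hyshift
      have hstep : ∀ t : ℝ, t < 0 → u y ≤ (tp/(tp - t)) * (g y + c + L * t) := by
        intro t ht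
        have hden : 0 < tp - t := by linarith
        set lam : ℝ := tp/(tp - t) with hlam_def
        have hlam0 : 0 ≤ lam := by positivity
        have hlam1 : lam ≤ 1 := by
          rw [hlam_def, div_le_one hden]; linarith
        have hlam_mul : lam * (tp - t) = tp := by
          rw [hlam_def]; field_simp
        have hc1 : lam * t + (1 - lam) * tp = 0 := by nlinarith [hlam_mul]
        have hcomb : lam • (y + t • bb) + (1 - lam) • (y + tp • bb) = y := by
          funext i
          simp only [Pi.add_apply, Pi.smul_apply, smul_eq_mul]
          linear_combination (bb i) * hc1
        have hmem1 : y + t • bb ∈ C0 n := mem_ray hyC0 hbb0 ht.le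
        have hcvx := huconv.2 hmem1 hmem2 hlam0
          (show (0:ℝ) ≤ 1 - lam by linarith) (show lam + (1 - lam) = 1 by ring)
        rw [hcomb] at hcvx
        have hu1 : u (y + t • bb) ≤ g (y + t • bb) + c :=
          le_trans (hub _ hmem1) (min_le_right _ _)
        have hg1 : g (y + t • bb) ≤ g y + L * t := by
          have hch := chord hgconv hgmono hyC0 hbb0 ht
          rw [hLy] at hch
          linarith
        have hu2 : u (y + tp • bb) ≤ 0 := by
          have h3 : u (y + tp • bb) ≤ f (y + tp • bb) :=
            le_trans (hub _ hmem2) (min_le_left _ _)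
          have h4 : f (y + tp • bb) ≤ 0 := nonpos_on_C0 hn hfmono hfbd hmem2
          linarith
        have h5 : (1 - lam) * u (y + tp • bb) ≤ 0 :=
          mul_nonpos_of_nonneg_of_nonpos (by linarith) hu2
        have h6 : lam * u (y + t • bb) ≤ lam * (g y + c + L * t) := by
          refine mul_le_mul_of_nonneg_left ?_ hlam0
          linarith
        simp only [smul_eq_mul] at hcvx
        linarith
      have hlam_tendsto : Tendsto (fun t : ℝ => tp/(tp - t)) atBot (𝓝 0) := by
        refine Tendsto.div_atTop tendsto_const_nhds ?_
        have hden_t : Tendsto (fun t : ℝ => tp + -t) atBot atTop :=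
          tendsto_atTop_add_const_left _ tp tendsto_neg_atBot_atTop
        exact hden_t.congr fun t => by ring
      have hG : Tendsto (fun t : ℝ => (tp/(tp - t)) * (g y + c) + L * (-tp) +
          L * tp * (tp/(tp - t))) atBot
          (𝓝 (0 * (g y + c) + L * (-tp) + L * tp * 0)) :=
        ((hlam_tendsto.mul_const _).add tendsto_const_nhds).add
          (hlam_tendsto.const_mul (L * tp))
      have hGval : (0:ℝ) * (g y + c) + L * (-tp) + L * tp * 0 = L * t₀ := by
        rw [htp_def]; ring
      rw [hGval] at hG
      have hGcongr : Tendsto (fun t : ℝ => (tp/(tp - t)) * (g y + c + L * t)) atBot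
          (𝓝 (L * t₀)) := by
        refine hG.congr' ?_
        filter_upwards [eventually_lt_atBot (0:ℝ)] with t ht
        have hden : 0 < tp - t := by linarith
        field_simp
        ring
      have hfin : u y ≤ L * t₀ := by
        refine ge_of_tendsto hGcongr ?_
        filter_upwards [eventually_lt_atBot (0:ℝ)] with t ht
        exact hstep t ht
      linarith
    have hUbad : ∀ y ∈ U, ¬ Tendsto (fun c : ℝ => convEnv n f g c y) atTop
        (𝓝 ((f y : ℝ) : EReal)) := by
      intro y hy htend
      obtain ⟨⟨hyC0, hyf⟩, _⟩ := hy
      have hyf' : t₀ * L + 1 < f y := hyf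
      have hmemIoi : ((f y : ℝ) : EReal) ∈ Ioi (((f y - 1 : ℝ) : ℝ) : EReal) :=
        EReal.coe_lt_coe_iff.2 (by linarith)
      have hnb : Ioi (((f y - 1 : ℝ) : ℝ) : EReal) ∈ 𝓝 ((f y : ℝ) : EReal) :=
        isOpen_Ioi.mem_nhds hmemIoi
      have hev : ∀ᶠ c in atTop,
          convEnv n f g c y ∈ Ioi (((f y - 1 : ℝ) : ℝ) : EReal) :=
        htend.eventually (eventually_of_mem hnb fun z hz => hz)
      obtain ⟨c, hc⟩ := hev.exists
      have hle : convEnv n f g c y ≤ (((f y - 1 : ℝ) : ℝ) : EReal) :=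
        le_trans (hkey y ⟨⟨hyC0, hyf⟩, ‹_›⟩ c) (EReal.coe_le_coe_iff.2 (by linarith))
      exact absurd hc (not_lt.2 hle)
    have hμU : (volume.restrict (C0 n)) U = 0 := by
      refine measure_mono_null ?_ (ae_iff.1 h1)
      intro y hy
      simp only [Set.mem_setOf_eq]
      exact hUbad y hy
    have hUsub : U ⊆ C0 n := fun y hy => hy.1.1
    rw [Measure.restrict_apply' isOpen_C0.measurableSet,
      Set.inter_eq_self_of_subset_left hUsub] at hμU
    exact absurd hμU (hUopen.measure_pos volume ⟨a + t₀ • bb, hUmem⟩).ne'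
  · -- (2) → (1)
    intro h2
    refine ae_restrict_of_forall_mem isOpen_C0.measurableSet ?_
    intro x hx
    have hub : ∀ c : ℝ, convEnv n f g c x ≤ ((f x : ℝ) : EReal) := by
      intro c
      refine iSup_le fun u => iSup_le fun hu => ?_
      exact EReal.coe_le_coe_iff.2 (le_trans (hu.2 x hx) (min_le_left _ _))
    rw [tendsto_order]
    constructor
    · intro A hA
      obtain ⟨B, hAB, hBf⟩ := exists_between hA
      have hBbot : B ≠ ⊥ := (bot_le.trans_lt hAB).ne'
      have hBtop : B ≠ ⊤ := (hBf.trans (EReal.coe_lt_top _)).ne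
      set r : ℝ := B.toReal with hr_def
      have hBr : ((r : ℝ) : EReal) = B := EReal.coe_toReal hBtop hBbot
      have hrf : r < f x := by
        rw [← hBr] at hBf
        exact EReal.coe_lt_coe_iff.1 hBf
      obtain ⟨p, hp⟩ := exists_subgrad hfconv hx
      have hp0 : ∀ v : Fin n → ℝ, (∀ i, 0 ≤ v i) → 0 ≤ p v := fun v hv =>
        subgrad_nonneg hfmono hx hp hv
      have hLvalineq : ∀ bb : Fin n → ℕ, (∀ i, 0 < bb i) →
          Lval g x (fun i => (bb i:ℝ)) ≤ Lval f x (fun i => (bb i:ℝ)) := by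
        intro bb hbbpos
        have hbb0 : ∀ i, (0:ℝ) ≤ ((bb i : ℝ)) := fun i => Nat.cast_nonneg _
        have hss := h2 x hx bb hbbpos
        rw [raySlope_eq hgconv hgmono hx hbb0, raySlope_eq hfconv hfmono hx hbb0] at hss
        exact EReal.coe_le_coe_iff.1 hss
      have hpL : ∀ v : Fin n → ℝ, (∀ i, 0 ≤ v i) → Lval g x v ≤ p v := fun v hv =>
        Lval_g_le_subgrad hfconv hgconv hfmono hgmono hx hLvalineq hp hp0 hv
      set s0 : ℝ := - ∑ i, x i with hs0_def
      have hs0 : 0 ≤ s0 := by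
        rw [hs0_def, neg_nonneg]
        exact Finset.sum_nonpos fun i _ => (C0_neg hx i).le
      set ε : ℝ := (f x - r)/(s0 + 1) with hε_def
      have hε : 0 < ε := div_pos (by linarith) (by linarith)
      obtain ⟨c0, hc0⟩ := bounded_below hgconv hgmono hx p hp0 hpL hε
      set m : (Fin n → ℝ) → ℝ := fun y => f x + p (y - x) + ε * ∑ i, y i with hm_def
      have hmconv : ConvexOn ℝ (C0 n) m := by
        refine convexOn_of_affine m fun a b' y z ha hb hab => ?_
        have hsplit : a • y + b' • z - x = a • (y - x) + b' • (z - x) := by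
          have h1 : a • (y - x) + b' • (z - x) = a • y + b' • z - (a • x + b' • x) := by
            rw [smul_sub, smul_sub]; abel
          rw [h1, ← add_smul, hab, one_smul]
        simp only [hm_def]
        rw [hsplit, map_add, p.map_smul, p.map_smul]
        simp only [smul_eq_mul, Pi.add_apply, Pi.smul_apply]
        rw [Finset.sum_add_distrib, ← Finset.mul_sum, ← Finset.mul_sum]
        linear_combination (-(f x)) * hab
      have hm_le_f : ∀ y ∈ C0 n, m y ≤ f y := by
        intro y hy
        have h1 := hp y hy
        have h3 : ∑ i, y i ≤ 0 := Finset.sum_nonpos fun i _ => (C0_neg hy i).le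
        have h4 : ε * ∑ i, y i ≤ 0 := mul_nonpos_of_nonneg_of_nonpos hε.le h3
        simp only [hm_def]
        linarith
      set c1 : ℝ := c0 + f x + ε * ∑ i, x i with hc1_def
      have hm_le_g : ∀ y ∈ C0 n, m y ≤ g y + c1 := by
        intro y hy
        have h1 := hc0 y hy
        have h2' : ∑ i, (y i - x i) = ∑ i, y i - ∑ i, x i := Finset.sum_sub_distrib _ _
        rw [h2'] at h1
        have h3 : ε * (∑ i, y i - ∑ i, x i) = ε * ∑ i, y i - ε * ∑ i, x i := by ring
        rw [h3] at h1
        simp only [hm_def, hc1_def]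
        linarith
      have hmx : r < m x := by
        simp only [hm_def]
        rw [sub_self, map_zero]
        have h2' : ε * ∑ i, x i = - (ε * s0) := by rw [hs0_def]; ring
        have h3 : ε * s0 < f x - r := by
          rw [hε_def, div_mul_eq_mul_div, div_lt_iff₀ (by linarith : (0:ℝ) < s0 + 1)]
          nlinarith
        linarith [h2', h3]
      filter_upwards [eventually_ge_atTop c1] with c hc
      have hcand : ConvexOn ℝ (C0 n) m ∧ ∀ y ∈ C0 n, m y ≤ min (f y) (g y + c) := by
        refine ⟨hmconv, fun y hy => le_min (hm_le_f y hy) ?_⟩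
        linarith [hm_le_g y hy]
      have hge : ((m x : ℝ) : EReal) ≤ convEnv n f g c x :=
        le_iSup_of_le m (le_iSup_of_le hcand le_rfl)
      calc A < B := hAB
        _ = ((r : ℝ) : EReal) := hBr.symm
        _ < ((m x : ℝ) : EReal) := EReal.coe_lt_coe_iff.2 hmx
        _ ≤ convEnv n f g c x := hge
    · intro B hB
      filter_upwards with c
      exact lt_of_le_of_lt (hub c) hB


end
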